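/- For every nonnegative integer r, every f ∈ ℂ^N and every t > 0, the modulus of smoothness is bounded by the K-functional: ω_r(f, t) ≤ 2^r · K_r(f, t). -/

import Mathlib

open Matrix

noncomputable section

/-- Euclidean (2-)norm on `ℂ^N`. -/
def cnorm2 {N : ℕ} (f : Fin N → ℂ) : ℝ := Real.sqrt (∑ i, ‖f i‖ ^ 2)

/-- The spectral operator `Σ_j c_j u_j u_j^*`. -/
def specOp {N : ℕ} (u : Fin N → Fin N → ℂ) (c : Fin N → ℂ) : Matrix (Fin N) (Fin N) ℂ :=
  ∑ j, c j • Matrix.vecMulVec (u j) (star (u j))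

variable {N : ℕ} {u : Fin N → Fin N → ℂ}

lemma specOp_apply (c : Fin N → ℂ) (a b : Fin N) :
    specOp u c a b = ∑ j, c j * (u j a * star (u j b)) := by
  simp [specOp, Matrix.sum_apply, Matrix.vecMulVec_apply, mul_assoc]

lemma huv (hu : ∀ i j, star (u i) ⬝ᵥ u j = if i = j then 1 else 0) (i j : Fin N) :
    ∑ k, star (u i k) * u j k = if i = j then 1 else 0 := by
  simpa [dotProduct] using hu i j

lemma specOp_one (hu : ∀ i j, star (u i) ⬝ᵥ u j = if i = j then 1 else 0) :
    specOp u (fun _ => (1:ℂ)) = 1 := by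
  set B : Matrix (Fin N) (Fin N) ℂ := Matrix.of u with hB
  have h1 : B * Bᴴ = 1 := by
    ext i j
    have h := huv hu j i
    simp only [Matrix.mul_apply, Matrix.conjTranspose_apply, hB, Matrix.of_apply]
    rw [show (∑ k, u i k * star (u j k)) = ∑ k, star (u j k) * u i k from
      Finset.sum_congr rfl fun k _ => mul_comm _ _, h]
    by_cases hij : i = j <;> simp [hij, Matrix.one_apply, eq_comm]
  have h2 : Bᴴ * B = 1 := mul_eq_one_comm.mp h1
  ext a b
  have h := congrArg (fun M => M a b) h2
  simp only [Matrix.mul_apply, Matrix.conjTranspose_apply, hB, Matrix.of_apply] at h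
  rw [specOp_apply]
  have h3 : ∑ j, (1:ℂ) * (u j a * star (u j b)) = star (∑ j, star (u j a) * u j b) := by
    simp only [star_sum, star_mul', star_star, one_mul]
  rw [h3, h]
  by_cases hab : a = b <;> simp [hab, Matrix.one_apply, eq_comm]

lemma specOp_mul (hu : ∀ i j, star (u i) ⬝ᵥ u j = if i = j then 1 else 0) (c d : Fin N → ℂ) :
    specOp u c * specOp u d = specOp u (fun j => c j * d j) := by
  ext a b
  rw [Matrix.mul_apply]
  simp only [specOp_apply]
  simp only [Finset.sum_mul, Finset.mul_sum]
  rw [Finset.sum_comm]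
  refine Finset.sum_congr rfl fun j _ => ?_
  rw [Finset.sum_comm]
  have key : ∀ y, (∑ x, (c y * (u y a * star (u y x))) * (d j * (u j x * star (u j b))))
      = (if y = j then ((c y * u y a) * (d j * star (u j b))) else 0) := by
    intro y
    have h1 : (∑ x, (c y * (u y a * star (u y x))) * (d j * (u j x * star (u j b))))
        = ((c y * u y a) * (d j * star (u j b))) * ∑ x, star (u y x) * u j x := by
      rw [Finset.mul_sum]
      exact Finset.sum_congr rfl fun x _ => by ring
    rw [h1, huv hu y j]
    by_cases hjl : y = j <;> simp [hjl]
  rw [Finset.sum_congr rfl fun y _ => key y, Finset.sum_ite_eq']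
  simp only [Finset.mem_univ, if_true]
  ring

lemma specOp_pow (hu : ∀ i j, star (u i) ⬝ᵥ u j = if i = j then 1 else 0) (c : Fin N → ℂ)
    (r : ℕ) : specOp u c ^ r = specOp u (fun j => c j ^ r) := by
  induction r with
  | zero => simpa using (specOp_one hu).symm
  | succ n ih =>
      rw [pow_succ, ih, specOp_mul hu]
      simp [pow_succ]

lemma specOp_sub (c d : Fin N → ℂ) :
    specOp u c - specOp u d = specOp u (fun j => c j - d j) := by
  simp [specOp, ← Finset.sum_sub_distrib, sub_smul]

lemma specOp_mulVec (c : Fin N → ℂ) (v : Fin N → ℂ) (i : Fin N) :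
    (specOp u c).mulVec v i = ∑ j, c j * (star (u j) ⬝ᵥ v) * u j i := by
  rw [Matrix.mulVec]
  simp only [dotProduct, specOp_apply, Finset.sum_mul]
  rw [Finset.sum_comm]
  refine Finset.sum_congr rfl fun j _ => ?_
  rw [Finset.mul_sum, Finset.sum_mul]
  exact Finset.sum_congr rfl fun k _ => by simp only [Pi.star_apply]; ring

lemma cstar_sq (z : ℂ) : (↑(‖z‖ ^ 2) : ℂ) = z * star z := by
  rw [Complex.star_def, Complex.mul_conj, Complex.normSq_eq_norm_sq]

lemma parseval (hu : ∀ i j, star (u i) ⬝ᵥ u j = if i = j then 1 else 0) (d : Fin N → ℂ) :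
    ∑ i, ‖∑ j, d j * u j i‖ ^ 2 = ∑ j, ‖d j‖ ^ 2 := by
  have expand : ∀ i : Fin N, ((∑ j, d j * u j i) * star (∑ j, d j * u j i))
      = ∑ j, ∑ l, (d j * star (d l)) * (u j i * star (u l i)) := by
    intro i
    rw [star_sum, Finset.sum_mul]
    refine Finset.sum_congr rfl fun j _ => ?_
    rw [Finset.mul_sum]
    refine Finset.sum_congr rfl fun l _ => ?_
    rw [star_mul']
    ring
  have key : (∑ i, (↑(‖∑ j, d j * u j i‖ ^ 2) : ℂ)) = ∑ j, (↑(‖d j‖ ^ 2) : ℂ) := by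
    calc (∑ i, (↑(‖∑ j, d j * u j i‖ ^ 2) : ℂ))
        = ∑ i, ∑ j, ∑ l, (d j * star (d l)) * (u j i * star (u l i)) := by
          refine Finset.sum_congr rfl fun i _ => ?_
          rw [cstar_sq, expand]
      _ = ∑ j, ∑ l, (d j * star (d l)) * (∑ i, u j i * star (u l i)) := by
          rw [Finset.sum_comm]
          refine Finset.sum_congr rfl fun j _ => ?_
          rw [Finset.sum_comm]
          exact Finset.sum_congr rfl fun l _ => (Finset.mul_sum _ _ _).symm
      _ = ∑ j, (d j * star (d j)) := by
          refine Finset.sum_congr rfl fun j _ => ?_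
          have hl : ∀ l, (d j * star (d l)) * (∑ i, u j i * star (u l i))
              = if l = j then d j * star (d j) else 0 := by
            intro l
            have h2 : (∑ i, u j i * star (u l i)) = if l = j then 1 else 0 := by
              rw [← huv hu l j]
              exact Finset.sum_congr rfl fun i _ => mul_comm _ _
            rw [h2]
            by_cases h : l = j <;> simp [h]
          rw [Finset.sum_congr rfl fun l _ => hl l, Finset.sum_ite_eq']
          simp
      _ = ∑ j, (↑(‖d j‖ ^ 2) : ℂ) := Finset.sum_congr rfl fun j _ => (cstar_sq _).symm
  exact_mod_cast key

lemma cnorm2_specOp (hu : ∀ i j, star (u i) ⬝ᵥ u j = if i = j then 1 else 0)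
    (c : Fin N → ℂ) (v : Fin N → ℂ) :
    cnorm2 ((specOp u c).mulVec v) = Real.sqrt (∑ j, ‖c j‖ ^ 2 * ‖star (u j) ⬝ᵥ v‖ ^ 2) := by
  rw [cnorm2]
  congr 1
  have : ∀ i, (specOp u c).mulVec v i = ∑ j, (c j * (star (u j) ⬝ᵥ v)) * u j i := by
    intro i; rw [specOp_mulVec]
  calc ∑ i, ‖(specOp u c).mulVec v i‖ ^ 2
      = ∑ i, ‖∑ j, (c j * (star (u j) ⬝ᵥ v)) * u j i‖ ^ 2 := by
        exact Finset.sum_congr rfl fun i _ => by rw [this]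
    _ = ∑ j, ‖c j * (star (u j) ⬝ᵥ v)‖ ^ 2 := parseval hu _
    _ = ∑ j, ‖c j‖ ^ 2 * ‖star (u j) ⬝ᵥ v‖ ^ 2 := by
        refine Finset.sum_congr rfl fun j _ => ?_
        rw [norm_mul, mul_pow]

lemma cnorm2_eq_coeff (hu : ∀ i j, star (u i) ⬝ᵥ u j = if i = j then 1 else 0) (v : Fin N → ℂ) :
    cnorm2 v = Real.sqrt (∑ j, ‖star (u j) ⬝ᵥ v‖ ^ 2) := by
  have h := cnorm2_specOp hu (fun _ => 1) v
  rw [specOp_one hu] at h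
  simpa using h

lemma cnorm2_eq_norm (v : Fin N → ℂ) :
    cnorm2 v = ‖(WithLp.equiv 2 (Fin N → ℂ)).symm v‖ := by
  rw [EuclideanSpace.norm_eq, cnorm2]
  congr 1

lemma cnorm2_nonneg (v : Fin N → ℂ) : 0 ≤ cnorm2 v := Real.sqrt_nonneg _

lemma cnorm2_add_le (x y : Fin N → ℂ) : cnorm2 (x + y) ≤ cnorm2 x + cnorm2 y := by
  rw [cnorm2_eq_norm, cnorm2_eq_norm, cnorm2_eq_norm]
  rw [show (WithLp.equiv 2 (Fin N → ℂ)).symm (x + y)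
      = (WithLp.equiv 2 (Fin N → ℂ)).symm x + (WithLp.equiv 2 (Fin N → ℂ)).symm y from rfl]
  exact norm_add_le _ _

lemma exp_norm_sq (θ : ℝ) : ‖Complex.exp (Complex.I * θ) - 1‖ ^ 2 = 2 - 2 * Real.cos θ := by
  rw [Complex.sq_norm, Complex.normSq_apply, mul_comm Complex.I]
  simp only [Complex.sub_re, Complex.sub_im, Complex.exp_ofReal_mul_I_re,
    Complex.exp_ofReal_mul_I_im, Complex.one_re, Complex.one_im]
  nlinarith [Real.sin_sq_add_cos_sq θ]

lemma exp_norm_sq_le_four (θ : ℝ) : ‖Complex.exp (Complex.I * θ) - 1‖ ^ 2 ≤ 4 := by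
  rw [exp_norm_sq]; nlinarith [Real.neg_one_le_cos θ]

lemma exp_norm_sq_le_sq (θ : ℝ) : ‖Complex.exp (Complex.I * θ) - 1‖ ^ 2 ≤ θ ^ 2 := by
  rw [exp_norm_sq]; nlinarith [Real.one_sub_sq_div_two_le_cos (x := θ)]

lemma sqrt_sum_mono {ι : Type*} [Fintype ι] {a b : ι → ℝ} (h : ∀ i, a i ≤ b i) :
    Real.sqrt (∑ i, a i) ≤ Real.sqrt (∑ i, b i) :=
  Real.sqrt_le_sqrt (Finset.sum_le_sum fun i _ => h i)

lemma sqrt_const_mul (C : ℝ) (hC : 0 ≤ C) (S : ℝ) :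
    Real.sqrt (C ^ 2 * S) = C * Real.sqrt S := by
  rw [Real.sqrt_mul (sq_nonneg C), Real.sqrt_sq hC]


/-- The graph translation operator `T_s = Σ_j e^{i s √λ_j} u_j u_j^*`. -/
def Tmat {N : ℕ} (u : Fin N → Fin N → ℂ) (lam : Fin N → ℝ) (s : ℝ) :
    Matrix (Fin N) (Fin N) ℂ :=
  specOp u (fun j => Complex.exp (Complex.I * (s : ℂ) * (Real.sqrt (lam j) : ℂ)))

/-- The `r`-th modulus of smoothness `ω_r(f,t) = sup_{|s| ≤ t} ‖(T_s - I)^r f‖₂`. -/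
def omegaMod {N : ℕ} (u : Fin N → Fin N → ℂ) (lam : Fin N → ℝ) (r : ℕ) (f : Fin N → ℂ)
    (t : ℝ) : ℝ :=
  ⨆ s : {s : ℝ // |s| ≤ t}, cnorm2 (((Tmat u lam s.1 - 1) ^ r).mulVec f)

/-- Functional calculus power `L^x = Σ_j λ_j^x u_j u_j^*` (with `0^0 = 1`). -/
def Lpow {N : ℕ} (u : Fin N → Fin N → ℂ) (lam : Fin N → ℝ) (x : ℝ) :
    Matrix (Fin N) (Fin N) ℂ :=
  specOp u (fun j => ((lam j ^ x : ℝ) : ℂ))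

/-- The `K`-functional `K_r(f,t) = inf_g ( ‖f-g‖₂ + (t/2)^r ‖L^{r/2} g‖₂ )`. -/
def Kfun {N : ℕ} (u : Fin N → Fin N → ℂ) (lam : Fin N → ℝ) (r : ℕ) (f : Fin N → ℂ)
    (t : ℝ) : ℝ :=
  ⨅ g : Fin N → ℂ, (cnorm2 (f - g) + (t / 2) ^ r * cnorm2 ((Lpow u lam ((r : ℝ) / 2)).mulVec g))

/-- For every nonnegative integer `r`, every `f ∈ ℂ^N` and every `t > 0`,
`ω_r(f, t) ≤ 2^r · K_r(f, t)`. -/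
theorem stmt5
    (N : ℕ) (hN : 2 ≤ N)
    (u : Fin N → Fin N → ℂ)
    (hu : ∀ i j, star (u i) ⬝ᵥ u j = if i = j then 1 else 0)
    (lam : Fin N → ℝ) (hmono : Monotone lam)
    (hlam0 : lam ⟨0, by omega⟩ = 0) (hlam1 : 0 < lam ⟨1, by omega⟩)
    (r : ℕ) (f : Fin N → ℂ) (t : ℝ) (ht : 0 < t) :
    omegaMod u lam r f t ≤ 2 ^ r * Kfun u lam r f t := by
  have h2r : (0:ℝ) < 2 ^ r := by positivity
  have hlamnn : ∀ j, 0 ≤ lam j := by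
    intro j
    have h0j : (⟨0, by omega⟩ : Fin N) ≤ j := by simp [Fin.le_def]
    calc (0:ℝ) = lam ⟨0, by omega⟩ := hlam0.symm
      _ ≤ lam j := hmono h0j
  have key : ∀ g : Fin N → ℂ, omegaMod u lam r f t ≤
      2 ^ r * (cnorm2 (f - g) + (t / 2) ^ r * cnorm2 ((Lpow u lam ((r : ℝ) / 2)).mulVec g)) := by
    intro g
    rw [omegaMod]
    have hne : Nonempty {s : ℝ // |s| ≤ t} := ⟨⟨0, by simpa using ht.le⟩⟩
    refine ciSup_le fun sp => ?_
    obtain ⟨s, hs⟩ := sp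
    set e : Fin N → ℂ := fun j => Complex.exp (Complex.I * (s:ℂ) * (Real.sqrt (lam j) : ℂ)) - 1
      with he
    -- basic norm bounds on e j
    have hebound : ∀ j, ‖e j‖ ^ 2 ≤ 4 ∧ ‖e j‖ ^ 2 ≤ t ^ 2 * lam j := by
      intro j
      have hej : e j = Complex.exp (Complex.I * ((s * Real.sqrt (lam j) : ℝ) : ℂ)) - 1 := by
        rw [he]; push_cast; ring_nf
      constructor
      · rw [hej]; exact exp_norm_sq_le_four _
      · rw [hej]
        refine le_trans (exp_norm_sq_le_sq _) ?_
        rw [mul_pow, Real.sq_sqrt (hlamnn j)]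
        have hs2 : s ^ 2 ≤ t ^ 2 := by
          have := abs_nonneg s
          nlinarith [abs_le.mp hs, abs_nonneg s, neg_abs_le s, le_abs_self s]
        exact mul_le_mul_of_nonneg_right hs2 (hlamnn j)
    have hT : (Tmat u lam s - 1) ^ r = specOp u (fun j => e j ^ r) := by
      rw [Tmat, show (1 : Matrix (Fin N) (Fin N) ℂ) = specOp u (fun _ => 1) from
        (specOp_one hu).symm, specOp_sub, specOp_pow hu]
    rw [hT]
    have hsplit : (specOp u (fun j => e j ^ r)).mulVec f
        = (specOp u (fun j => e j ^ r)).mulVec (f - g) + (specOp u (fun j => e j ^ r)).mulVec g := by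
      rw [← Matrix.mulVec_add, sub_add_cancel]
    rw [hsplit]
    refine le_trans (cnorm2_add_le _ _) ?_
    have hcoefpow : ∀ j (v : Fin N → ℂ), ‖e j ^ r‖ ^ 2 * ‖star (u j) ⬝ᵥ v‖ ^ 2
        = (‖e j‖ ^ 2) ^ r * ‖star (u j) ⬝ᵥ v‖ ^ 2 := by
      intro j v
      rw [norm_pow, ← pow_mul, ← pow_mul, mul_comm r 2, pow_mul]
    have hb1 : cnorm2 ((specOp u (fun j => e j ^ r)).mulVec (f - g)) ≤ 2 ^ r * cnorm2 (f - g) := by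
      rw [cnorm2_specOp hu, cnorm2_eq_coeff hu (f - g)]
      rw [show (2:ℝ) ^ r * Real.sqrt (∑ j, ‖star (u j) ⬝ᵥ (f - g)‖ ^ 2)
          = Real.sqrt (∑ j, ((2:ℝ)^r)^2 * ‖star (u j) ⬝ᵥ (f - g)‖ ^ 2) by
        rw [← Finset.mul_sum, sqrt_const_mul _ (by positivity)]]
      refine sqrt_sum_mono fun j => ?_
      rw [hcoefpow]
      have h4 : (‖e j‖ ^ 2) ^ r ≤ ((2:ℝ)^r)^2 := by
        have h42 : ((2:ℝ)^r)^2 = ((4:ℝ))^r := by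
          rw [← pow_mul, mul_comm, pow_mul]; norm_num
        rw [h42]
        exact pow_le_pow_left₀ (sq_nonneg _) (hebound j).1 r
      exact mul_le_mul_of_nonneg_right h4 (sq_nonneg _)
    have hLnorm : ∀ j, ‖((lam j ^ ((r:ℝ)/2) : ℝ) : ℂ)‖ ^ 2 = lam j ^ r := by
      intro j
      rw [Complex.norm_real, Real.norm_eq_abs, sq_abs]
      rw [← Real.rpow_natCast (lam j ^ ((r:ℝ)/2)) 2, ← Real.rpow_mul (hlamnn j)]
      rw [show (r:ℝ)/2 * (2:ℕ) = (r:ℝ) by push_cast; ring, Real.rpow_natCast]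
    have hb2 : cnorm2 ((specOp u (fun j => e j ^ r)).mulVec g)
        ≤ t ^ r * cnorm2 ((Lpow u lam ((r : ℝ) / 2)).mulVec g) := by
      rw [Lpow, cnorm2_specOp hu, cnorm2_specOp hu]
      rw [show (t:ℝ) ^ r * Real.sqrt (∑ j, ‖((lam j ^ ((r:ℝ)/2) : ℝ) : ℂ)‖ ^ 2 * ‖star (u j) ⬝ᵥ g‖ ^ 2)
          = Real.sqrt (∑ j, ((t:ℝ)^r)^2 * (‖((lam j ^ ((r:ℝ)/2) : ℝ) : ℂ)‖ ^ 2 * ‖star (u j) ⬝ᵥ g‖ ^ 2)) by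
        rw [← Finset.mul_sum, sqrt_const_mul _ (by positivity)]]
      refine sqrt_sum_mono fun j => ?_
      rw [hcoefpow, hLnorm]
      have h5 : (‖e j‖ ^ 2) ^ r ≤ ((t:ℝ)^r)^2 * lam j ^ r := by
        have hh := pow_le_pow_left₀ (sq_nonneg (‖e j‖)) (hebound j).2 r
        calc (‖e j‖ ^ 2) ^ r ≤ (t ^ 2 * lam j) ^ r := hh
          _ = ((t:ℝ)^r)^2 * lam j ^ r := by ring
      calc (‖e j‖ ^ 2) ^ r * ‖star (u j) ⬝ᵥ g‖ ^ 2
          ≤ (((t:ℝ)^r)^2 * lam j ^ r) * ‖star (u j) ⬝ᵥ g‖ ^ 2 :=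
            mul_le_mul_of_nonneg_right h5 (sq_nonneg _)
        _ = ((t:ℝ)^r)^2 * (lam j ^ r * ‖star (u j) ⬝ᵥ g‖ ^ 2) := by ring
    calc cnorm2 ((specOp u (fun j => e j ^ r)).mulVec (f - g))
          + cnorm2 ((specOp u (fun j => e j ^ r)).mulVec g)
        ≤ 2 ^ r * cnorm2 (f - g) + t ^ r * cnorm2 ((Lpow u lam ((r : ℝ) / 2)).mulVec g) :=
          add_le_add hb1 hb2
      _ = 2 ^ r * (cnorm2 (f - g) + (t / 2) ^ r * cnorm2 ((Lpow u lam ((r : ℝ) / 2)).mulVec g)) := by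
          have h22 : (2:ℝ) ^ r * (t/2) ^ r = t ^ r := by
            rw [← mul_pow, show (2:ℝ)*(t/2) = t from by ring]
          rw [mul_add, ← mul_assoc, h22]
  have hinf : omegaMod u lam r f t / 2 ^ r ≤ Kfun u lam r f t := by
    rw [Kfun]
    refine le_ciInf fun g => ?_
    rw [div_le_iff₀ h2r, mul_comm]
    exact key g
  calc omegaMod u lam r f t = (omegaMod u lam r f t / 2 ^ r) * 2 ^ r := by field_simp
    _ ≤ Kfun u lam r f t * 2 ^ r := mul_le_mul_of_nonneg_right hinf h2r.le
    _ = 2 ^ r * Kfun u lam r f t := mul_comm _ _
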